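/- Let {ε_t} be iid with mean 0 and variance 1, and let coefficients A_T(s₁,s₂) ∈ ℂ satisfy sup_{T,s} ∑_{s₁<s}(|A_T(s₁,s)| + |A_T(s,s₁)|) < ∞ and sup_{T,s}|A_T(s,s)| < ∞. Define M_T(s) = (ε_s² - 1)A_T(s,s) + ε_s ∑_{s₁=1}^{s-1} ε_{s₁}(A_T(s₁,s) + A_T(s,s₁)). Then {M_T(s)} is a martingale difference sequence with respect to F_s = σ(ε_s, ε_{s-1}, …), and if E ε_t⁸ < ∞ then sup_{s,T} E|M_T(s)|⁴ < ∞. -/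

import Mathlib

open MeasureTheory

open Finset ProbabilityTheory

private lemma aux_pow4_add' (x y : ℝ) : (x + y)^4 ≤ 8*(x^4 + y^4) := by
  nlinarith [sq_nonneg (x - y), sq_nonneg (x + y), sq_nonneg (x^2 - y^2), sq_nonneg (x*y)]

private lemma aux_wpow4' {ι : Type*} (t : Finset ι) (w x : ι → ℝ) (hw : ∀ i ∈ t, 0 ≤ w i) :
    (∑ i ∈ t, w i * x i)^4 ≤ (∑ i ∈ t, w i)^3 * ∑ i ∈ t, w i * x i ^ 4 := by
  have h1 : (∑ i ∈ t, w i * x i)^2 ≤ (∑ i ∈ t, w i) * ∑ i ∈ t, w i * x i ^ 2 :=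
    Finset.sum_sq_le_sum_mul_sum_of_sq_eq_mul t hw
      (fun i hi => mul_nonneg (hw i hi) (sq_nonneg _)) (fun i hi => by ring)
  have h2 : (∑ i ∈ t, w i * x i ^ 2)^2 ≤ (∑ i ∈ t, w i) * ∑ i ∈ t, w i * x i ^ 4 :=
    Finset.sum_sq_le_sum_mul_sum_of_sq_eq_mul t hw
      (fun i hi => mul_nonneg (hw i hi) (by positivity)) (fun i hi => by ring)
  calc (∑ i ∈ t, w i * x i)^4 = ((∑ i ∈ t, w i * x i)^2)^2 := by ring
    _ ≤ ((∑ i ∈ t, w i) * ∑ i ∈ t, w i * x i ^ 2)^2 := by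
        apply pow_le_pow_left₀ (sq_nonneg _) h1
    _ = (∑ i ∈ t, w i)^2 * (∑ i ∈ t, w i * x i ^ 2)^2 := by ring
    _ ≤ (∑ i ∈ t, w i)^2 * ((∑ i ∈ t, w i) * ∑ i ∈ t, w i * x i ^ 4) :=
        mul_le_mul_of_nonneg_left h2 (by positivity)
    _ = (∑ i ∈ t, w i)^3 * ∑ i ∈ t, w i * x i ^ 4 := by ring

private lemma aux_pow_int' {Ωs : Type*} [m0 : MeasurableSpace Ωs] (μ : Measure Ωs)
    [IsProbabilityMeasure μ]
    (f : Ωs → ℝ) (hf : Measurable f) (h8 : Integrable (fun ω => f ω ^ 8) μ)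
    (k : ℕ) (hk : k ≤ 8) : Integrable (fun ω => f ω ^ k) μ := by
  refine Integrable.mono (h8.add (integrable_const 1)) ((hf.pow_const k).aestronglyMeasurable) ?_
  refine Filter.Eventually.of_forall fun ω => ?_
  have h1 : |f ω ^ k| = |f ω| ^ k := abs_pow _ _
  have h2 : f ω ^ 8 = |f ω| ^ 8 := by
    rw [← abs_pow]; exact (abs_of_nonneg (by positivity)).symm
  rw [Real.norm_eq_abs, Real.norm_eq_abs, h1]
  have h3 : (0:ℝ) ≤ f ω ^ 8 + 1 := by positivity
  simp only [Pi.add_apply]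
  rw [abs_of_nonneg h3, h2]
  rcases le_or_gt (|f ω|) 1 with h | h
  · have : |f ω| ^ k ≤ 1 := pow_le_one₀ (abs_nonneg _) h
    nlinarith [pow_nonneg (abs_nonneg (f ω)) 8]
  · have : |f ω| ^ k ≤ |f ω| ^ 8 := pow_le_pow_right₀ h.le hk
    linarith

/-- With iid innovations (mean 0, variance 1, `E ε⁸ < ∞`) and deterministic
coefficients `A_T(s₁,s₂)` with uniform row/column absolute summability, the quantities
`M_T(s) = (ε_s² - 1)A_T(s,s) + ε_s ∑_{s₁<s} ε_{s₁}(A_T(s₁,s) + A_T(s,s₁))` form a martingale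
difference sequence w.r.t. the natural filtration `F_s = σ(ε_s, ε_{s-1}, …)`, with
`sup_{s,T} E|M_T(s)|⁴ < ∞`. -/
theorem martingale_difference_structure
    {Ωs : Type*} [m0 : MeasurableSpace Ωs] (μ : Measure Ωs) [IsProbabilityMeasure μ]
    (ε : ℕ → Ωs → ℝ) (hmeas : ∀ t, Measurable (ε t))
    (hindep : ProbabilityTheory.iIndepFun ε μ)
    (hident : ∀ s t, ProbabilityTheory.IdentDistrib (ε s) (ε t) μ μ)
    (hmean : ∀ t, ∫ ω, ε t ω ∂μ = 0)
    (hvar : ∀ t, ∫ ω, (ε t ω) ^ 2 ∂μ = 1)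
    (hmom8 : ∀ t, Integrable (fun ω => (ε t ω) ^ 8) μ)
    (A : ℕ → ℕ → ℕ → ℂ)
    (hA1 : ∃ C : ℝ, ∀ T s, ∑ s₁ ∈ Finset.Icc 1 (s - 1), (‖A T s₁ s‖ + ‖A T s s₁‖) ≤ C)
    (hA2 : ∃ C : ℝ, ∀ T s, ‖A T s s‖ ≤ C)
    (F : ℕ → MeasurableSpace Ωs)
    (hF : ∀ s, F s = ⨆ t ∈ Set.Iic s, MeasurableSpace.comap (ε t) inferInstance)
    (M : ℕ → ℕ → Ωs → ℂ)
    (hM : ∀ T s ω, M T s ω =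
        (((ε s ω) ^ 2 - 1 : ℝ) : ℂ) * A T s s +
          ((ε s ω : ℝ) : ℂ) * ∑ s₁ ∈ Finset.Icc 1 (s - 1),
            ((ε s₁ ω : ℝ) : ℂ) * (A T s₁ s + A T s s₁)) :
    (∀ T s, Measurable[F s] (M T s)) ∧
    (∀ T s, 1 ≤ s → μ[M T s | F (s - 1)] =ᵐ[μ] 0) ∧
    (∃ C : ℝ, ∀ T s, ∫ ω, ‖M T s ω‖ ^ 4 ∂μ ≤ C) := by
  have hεint : ∀ t (k : ℕ), k ≤ 8 → Integrable (fun ω => ε t ω ^ k) μ :=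
    fun t k hk => aux_pow_int' μ (ε t) (hmeas t) (hmom8 t) k hk
  refine ⟨?_, ?_, ?_⟩
  · intro T s
    have key : ∀ t, t ≤ s → Measurable[F s] (ε t) := by
      intro t ht
      rw [hF]
      exact measurable_iff_comap_le.mpr
        (le_iSup₂ (f := fun t (_ : t ∈ Set.Iic s) => MeasurableSpace.comap (ε t) inferInstance) t ht)
    rw [show M T s = fun ω => (((ε s ω) ^ 2 - 1 : ℝ) : ℂ) * A T s s +
            ((ε s ω : ℝ) : ℂ) * ∑ s₁ ∈ Finset.Icc 1 (s - 1),
              ((ε s₁ ω : ℝ) : ℂ) * (A T s₁ s + A T s s₁) from funext (hM T s)]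
    apply Measurable.add
    · exact (Complex.measurable_ofReal.comp
        (((key s le_rfl).pow_const 2).sub measurable_const)).mul_const _
    · refine (Complex.measurable_ofReal.comp (key s le_rfl)).mul ?_
      refine Finset.measurable_sum _ fun s₁ hs₁ => ?_
      have hle : s₁ ≤ s := le_trans (Finset.mem_Icc.mp hs₁).2 (Nat.sub_le s 1)
      exact (Complex.measurable_ofReal.comp (key s₁ hle)).mul_const _
  · intro T s hs
    have hm : F (s-1) ≤ m0 := by
      rw [hF]
      exact iSup₂_le fun t _ => (hmeas t).comap_le
    haveI : SigmaFinite (μ.trim hm) := inferInstance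
    -- ε t is m-measurable for t ≤ s - 1
    have hmle : ∀ t, t ≤ s - 1 → Measurable[F (s-1)] (ε t) := by
      intro t ht
      rw [hF]
      exact measurable_iff_comap_le.mpr
        (le_iSup₂ (f := fun t (_ : t ∈ Set.Iic (s-1)) => MeasurableSpace.comap (ε t) inferInstance) t ht)
    -- independence of ε s from m
    have hIndep : Indep (MeasurableSpace.comap (ε s) inferInstance) (F (s-1)) μ := by
      have h := ProbabilityTheory.indep_iSup_of_disjoint
        (m := fun t => MeasurableSpace.comap (ε t) inferInstance)
        (fun t => (hmeas t).comap_le) ((ProbabilityTheory.iIndepFun_iff_iIndep _ _ _).mp hindep)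
        (S := {s}) (T := Set.Iic (s-1))
        (by simp [Set.disjoint_singleton_left]; omega)
      rw [hF]
      simpa using h
    have hmeas_comap : Measurable[MeasurableSpace.comap (ε s) inferInstance] (ε s) :=
      measurable_iff_comap_le.mpr le_rfl
    -- real integrabilities
    have hint1 : ∀ t, Integrable (ε t) μ := by
      intro t
      have := hεint t 1 (by norm_num)
      simpa using this
    have hg₀int : Integrable (fun ω => ε s ω ^ 2 - 1) μ :=
      (hεint s 2 (by norm_num)).sub (integrable_const 1)
    have hmulint : ∀ s₁, s₁ ∈ Finset.Icc 1 (s-1) → Integrable (fun ω => ε s₁ ω * ε s ω) μ := by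
      intro s₁ hs₁
      have hne : s₁ ≠ s := by
        have := Finset.mem_Icc.mp hs₁; omega
      exact (hindep.indepFun hne).integrable_mul (hint1 s₁) (hint1 s)
    -- conditional expectations of real pieces vanish
    have hce0 : μ[(fun ω => ε s ω ^ 2 - 1)|F (s-1)] =ᵐ[μ] fun _ => 0 := by
      have hsm : StronglyMeasurable[MeasurableSpace.comap (ε s) inferInstance]
          (fun ω => ε s ω ^ 2 - 1) :=
        ((hmeas_comap.pow_const 2).sub measurable_const).stronglyMeasurable
      have h := condExp_indep_eq (hmeas s).comap_le hm hsm hIndep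
      refine h.trans ?_
      have : (μ[fun ω => ε s ω ^ 2 - 1]) = 0 := by
        rw [integral_sub (hεint s 2 (by norm_num)) (integrable_const 1)]
        simp [hvar s]
      rw [this]
    have hceps : μ[ε s|F (s-1)] =ᵐ[μ] fun _ => 0 := by
      have h := condExp_indep_eq (hmeas s).comap_le hm hmeas_comap.stronglyMeasurable hIndep
      refine h.trans ?_
      rw [hmean s]
    have hcemul : ∀ s₁, s₁ ∈ Finset.Icc 1 (s-1) →
        μ[(fun ω => ε s₁ ω * ε s ω)|F (s-1)] =ᵐ[μ] fun _ => 0 := by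
      intro s₁ hs₁
      have hs₁le : s₁ ≤ s - 1 := (Finset.mem_Icc.mp hs₁).2
      have h : μ[(fun ω => ε s₁ ω * ε s ω)|F (s-1)] =ᵐ[μ] (ε s₁) * μ[ε s|F (s-1)] :=
        condExp_mul_of_stronglyMeasurable_left (μ := μ) (mΩ := m0)
          ((hmle s₁ hs₁le).stronglyMeasurable) (hmulint s₁ hs₁) (hint1 s)
      refine h.trans ?_
      filter_upwards [hceps] with ω hω
      simp [Pi.mul_apply, hω]
    -- integrability of M T s
    have hMrep : ∀ ω, M T s ω = (ε s ω ^ 2 - 1) • A T s s +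
        ∑ s₁ ∈ Finset.Icc 1 (s-1), (ε s₁ ω * ε s ω) • (A T s₁ s + A T s s₁) := by
      intro ω
      rw [hM T s ω, Finset.mul_sum]
      simp only [Complex.real_smul]
      push_cast
      congr 1
      refine Finset.sum_congr rfl fun s₁ _ => by ring
    have hMint : Integrable (M T s) μ := by
      rw [show M T s = fun ω => (ε s ω ^ 2 - 1) • A T s s +
          ∑ s₁ ∈ Finset.Icc 1 (s-1), (ε s₁ ω * ε s ω) • (A T s₁ s + A T s s₁)
        from funext hMrep]
      exact (hg₀int.smul_const _).add
        (integrable_finset_sum _ fun s₁ hs₁ => (hmulint s₁ hs₁).smul_const _)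
    -- set integrals vanish
    have hset : ∀ B : Set Ωs, MeasurableSet[F (s-1)] B → μ B < ⊤ →
        ∫ ω in B, (0:ℂ) ∂μ = ∫ ω in B, M T s ω ∂μ := by
      intro B hB _
      have e0 : ∫ ω in B, (ε s ω ^ 2 - 1) ∂μ = 0 := by
        rw [← setIntegral_condExp hm hg₀int hB]
        rw [setIntegral_congr_ae (hm B hB) (hce0.mono fun ω hω _ => hω)]
        simp
      have emul : ∀ s₁ ∈ Finset.Icc 1 (s-1), ∫ ω in B, (ε s₁ ω * ε s ω) ∂μ = 0 := by
        intro s₁ hs₁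
        rw [← setIntegral_condExp hm (hmulint s₁ hs₁) hB]
        rw [setIntegral_congr_ae (hm B hB) ((hcemul s₁ hs₁).mono fun ω hω _ => hω)]
        simp
      rw [setIntegral_congr_ae (hm B hB) (Filter.Eventually.of_forall fun ω _ => hMrep ω)]
      rw [integral_add ((hg₀int.smul_const _).integrableOn)
        ((integrable_finset_sum _ (f := fun s₁ ω => (ε s₁ ω * ε s ω) • (A T s₁ s + A T s s₁)) fun s₁ hs₁ => (hmulint s₁ hs₁).smul_const _).integrableOn)]
      rw [integral_finset_sum _ fun s₁ hs₁ => ((hmulint s₁ hs₁).smul_const _).integrableOn]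
      rw [integral_smul_const, e0]
      simp only [zero_smul, zero_add, integral_zero]
      rw [Finset.sum_eq_zero]
      intro s₁ hs₁
      rw [integral_smul_const, emul s₁ hs₁, zero_smul]
    have := ae_eq_condExp_of_forall_setIntegral_eq hm hMint
      (fun B _ _ => integrableOn_zero)
      hset
      (stronglyMeasurable_const.aestronglyMeasurable)
    exact this.symm
  · obtain ⟨C₁, hC₁⟩ := hA1
    obtain ⟨C₂, hC₂⟩ := hA2
    have hC₁0 : 0 ≤ C₁ := le_trans (by simp) (hC₁ 0 1)
    have hC₂0 : 0 ≤ C₂ := le_trans (norm_nonneg _) (hC₂ 0 0)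
    -- moments
    set m4 : ℝ := ∫ ω, ε 0 ω ^ 4 ∂μ with hm4def
    set m8 : ℝ := ∫ ω, ε 0 ω ^ 8 ∂μ with hm8def
    have hm4 : ∀ t, ∫ ω, ε t ω ^ 4 ∂μ = m4 := fun t =>
      ((hident t 0).comp (measurable_id.pow_const 4)).integral_eq
    have hm8 : ∀ t, ∫ ω, ε t ω ^ 8 ∂μ = m8 := fun t =>
      ((hident t 0).comp (measurable_id.pow_const 8)).integral_eq
    have hm40 : 0 ≤ m4 := integral_nonneg fun ω => by positivity
    refine ⟨64 * C₂^4 * (m8 + 1) + 8 * C₁^4 * m4^2, fun T s => ?_⟩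
    set w : ℕ → ℝ := fun s₁ => ‖A T s₁ s + A T s s₁‖ with hwdef
    have hw0 : ∀ s₁ ∈ Finset.Icc 1 (s-1), 0 ≤ w s₁ := fun s₁ _ => norm_nonneg _
    set S : ℝ := ∑ s₁ ∈ Finset.Icc 1 (s-1), w s₁ with hSdef
    have hS0 : 0 ≤ S := Finset.sum_nonneg hw0
    have hSC : S ≤ C₁ :=
      le_trans (Finset.sum_le_sum fun s₁ _ => norm_add_le _ _) (hC₁ T s)
    have hne : ∀ s₁ ∈ Finset.Icc 1 (s-1), s₁ ≠ s := fun s₁ hs₁ => by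
      have := Finset.mem_Icc.mp hs₁; omega
    -- dominating function
    set G : Ωs → ℝ := fun ω => 64 * C₂^4 * (ε s ω ^ 8 + 1) +
        8 * S^3 * ∑ s₁ ∈ Finset.Icc 1 (s-1), w s₁ * (ε s ω ^ 4 * ε s₁ ω ^ 4) with hGdef
    have hprod_int : ∀ s₁ ∈ Finset.Icc 1 (s-1),
        Integrable (fun ω => ε s ω ^ 4 * ε s₁ ω ^ 4) μ := by
      intro s₁ hs₁
      have hIF : IndepFun (fun ω => ε s ω ^ 4) (fun ω => ε s₁ ω ^ 4) μ :=
        (hindep.indepFun (hne s₁ hs₁).symm).comp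
          (measurable_id.pow_const 4) (measurable_id.pow_const 4)
      exact hIF.integrable_mul (hεint s 4 (by norm_num)) (hεint s₁ 4 (by norm_num))
    have hI1 : Integrable (fun ω => 64 * C₂^4 * (ε s ω ^ 8 + 1)) μ :=
      ((hεint s 8 le_rfl).add (integrable_const 1)).const_mul _
    have hI2 : Integrable (fun ω =>
        8 * S^3 * ∑ s₁ ∈ Finset.Icc 1 (s-1), w s₁ * (ε s ω ^ 4 * ε s₁ ω ^ 4)) μ :=
      (integrable_finset_sum _ fun s₁ hs₁ => (hprod_int s₁ hs₁).const_mul _).const_mul _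
    have hGint : Integrable G μ := hI1.add hI2
    -- pointwise bound
    have hpt : ∀ ω, ‖M T s ω‖ ^ 4 ≤ G ω := by
      intro ω
      have step1 : ‖M T s ω‖ ≤ |ε s ω ^ 2 - 1| * C₂ +
          |ε s ω| * ∑ s₁ ∈ Finset.Icc 1 (s-1), w s₁ * |ε s₁ ω| := by
        rw [hM T s ω]
        refine le_trans (norm_add_le _ _) (add_le_add ?_ ?_)
        · rw [norm_mul, Complex.norm_real, Real.norm_eq_abs]
          exact mul_le_mul_of_nonneg_left (hC₂ T s) (abs_nonneg _)
        · rw [norm_mul, Complex.norm_real, Real.norm_eq_abs]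
          refine mul_le_mul_of_nonneg_left ?_ (abs_nonneg _)
          refine le_trans (norm_sum_le _ _) (le_of_eq (Finset.sum_congr rfl fun s₁ _ => ?_))
          rw [norm_mul, Complex.norm_real, Real.norm_eq_abs, mul_comm]
      have h4 : ‖M T s ω‖^4 ≤ (|ε s ω ^ 2 - 1| * C₂ +
          |ε s ω| * ∑ s₁ ∈ Finset.Icc 1 (s-1), w s₁ * |ε s₁ ω|)^4 :=
        pow_le_pow_left₀ (norm_nonneg _) step1 4
      have h8 := aux_pow4_add' (|ε s ω ^ 2 - 1| * C₂)
        (|ε s ω| * ∑ s₁ ∈ Finset.Icc 1 (s-1), w s₁ * |ε s₁ ω|)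
      -- first term
      have ht1 : (|ε s ω ^ 2 - 1| * C₂)^4 ≤ C₂^4 * (8 * (ε s ω ^ 8 + 1)) := by
        have habs : |ε s ω ^ 2 - 1| ≤ ε s ω ^ 2 + 1 :=
          le_trans (abs_sub (ε s ω ^2) 1) (by simp)
        have h1 : (|ε s ω ^ 2 - 1|)^4 ≤ (ε s ω ^ 2 + 1)^4 :=
          pow_le_pow_left₀ (abs_nonneg _) habs 4
        have h2 : (ε s ω ^ 2 + 1)^4 ≤ 8 * ((ε s ω ^ 2)^4 + 1^4) := aux_pow4_add' _ _
        calc (|ε s ω ^ 2 - 1| * C₂)^4 = (|ε s ω ^ 2 - 1|)^4 * C₂^4 := by ring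
          _ ≤ (8 * ((ε s ω^2)^4 + 1^4)) * C₂^4 :=
              mul_le_mul_of_nonneg_right (le_trans h1 h2) (by positivity)
          _ = C₂^4 * (8 * (ε s ω ^ 8 + 1)) := by ring
      -- second term
      have ht2 : (|ε s ω| * ∑ s₁ ∈ Finset.Icc 1 (s-1), w s₁ * |ε s₁ ω|)^4 ≤
          S^3 * ∑ s₁ ∈ Finset.Icc 1 (s-1), w s₁ * (ε s ω ^ 4 * ε s₁ ω ^ 4) := by
        have hwp := aux_wpow4' (Finset.Icc 1 (s-1)) w (fun s₁ => |ε s₁ ω|) hw0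
        have heq : ∀ s₁, |ε s₁ ω| ^ 4 = ε s₁ ω ^ 4 := fun s₁ => by
          rw [← abs_pow]; exact abs_of_nonneg (by positivity)
        calc (|ε s ω| * ∑ s₁ ∈ Finset.Icc 1 (s-1), w s₁ * |ε s₁ ω|)^4
            = |ε s ω|^4 * (∑ s₁ ∈ Finset.Icc 1 (s-1), w s₁ * |ε s₁ ω|)^4 := by ring
          _ ≤ |ε s ω|^4 * (S^3 * ∑ s₁ ∈ Finset.Icc 1 (s-1), w s₁ * |ε s₁ ω| ^ 4) :=
              mul_le_mul_of_nonneg_left hwp (by positivity)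
          _ = S^3 * ∑ s₁ ∈ Finset.Icc 1 (s-1), w s₁ * (ε s ω ^ 4 * ε s₁ ω ^ 4) := by
              simp only [Finset.mul_sum]
              refine Finset.sum_congr rfl fun s₁ _ => ?_
              rw [← heq s, ← heq s₁]; ring
      calc ‖M T s ω‖^4 ≤ _ := h4
        _ ≤ 8 * ((|ε s ω ^ 2 - 1| * C₂)^4 +
            (|ε s ω| * ∑ s₁ ∈ Finset.Icc 1 (s-1), w s₁ * |ε s₁ ω|)^4) := h8
        _ ≤ 8 * (C₂^4 * (8 * (ε s ω ^ 8 + 1)) +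
            S^3 * ∑ s₁ ∈ Finset.Icc 1 (s-1), w s₁ * (ε s ω ^ 4 * ε s₁ ω ^ 4)) := by
              exact mul_le_mul_of_nonneg_left (add_le_add ht1 ht2) (by norm_num)
        _ = G ω := by rw [hGdef]; ring
    -- integral bound
    have hint_le : ∫ ω, ‖M T s ω‖ ^ 4 ∂μ ≤ ∫ ω, G ω ∂μ :=
      integral_mono_of_nonneg (Filter.Eventually.of_forall fun ω => by positivity) hGint
        (Filter.Eventually.of_forall hpt)
    refine le_trans hint_le ?_
    -- compute ∫ G
    have hGval : ∫ ω, G ω ∂μ = 64 * C₂^4 * (m8 + 1) +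
        8 * S^3 * ∑ s₁ ∈ Finset.Icc 1 (s-1), w s₁ * (m4 * m4) := by
      simp only [hGdef]
      rw [integral_add hI1 hI2]
      rw [integral_const_mul, integral_const_mul,
        integral_add (hεint s 8 le_rfl) (integrable_const 1),
        integral_finset_sum _ (fun s₁ hs₁ => (hprod_int s₁ hs₁).const_mul _)]
      simp only [integral_const, measure_univ, ENNReal.toReal_one, probReal_univ, one_smul, hm8]
      congr 1
      refine congrArg _ (Finset.sum_congr rfl fun s₁ hs₁ => ?_)
      rw [integral_const_mul]
      congr 1
      have hIF : IndepFun (fun ω => ε s ω ^ 4) (fun ω => ε s₁ ω ^ 4) μ :=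
        (hindep.indepFun (hne s₁ hs₁).symm).comp
          (measurable_id.pow_const 4) (measurable_id.pow_const 4)
      have := hIF.integral_mul_eq_mul_integral (hεint s 4 (by norm_num)).aestronglyMeasurable (hεint s₁ 4 (by norm_num)).aestronglyMeasurable
      rw [show (fun ω => ε s ω ^ 4) * (fun ω => ε s₁ ω ^ 4) =
        fun ω => ε s ω ^ 4 * ε s₁ ω ^ 4 from rfl] at this
      rw [this, hm4 s, hm4 s₁]
    rw [hGval]
    have hsum_le : ∑ s₁ ∈ Finset.Icc 1 (s-1), w s₁ * (m4 * m4) ≤ C₁ * m4^2 := by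
      rw [← Finset.sum_mul, ← hSdef]
      have h : (m4 * m4) = m4^2 := by ring
      rw [h]
      exact mul_le_mul_of_nonneg_right hSC (by positivity)
    have h3 : S^3 ≤ C₁^3 := pow_le_pow_left₀ hS0 hSC 3
    have hsum0 : 0 ≤ ∑ s₁ ∈ Finset.Icc 1 (s-1), w s₁ * (m4 * m4) :=
      Finset.sum_nonneg fun s₁ hs₁ => mul_nonneg (hw0 s₁ hs₁) (by positivity)
    have : 8 * S^3 * ∑ s₁ ∈ Finset.Icc 1 (s-1), w s₁ * (m4 * m4) ≤ 8 * C₁^4 * m4^2 := by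
      calc 8 * S^3 * ∑ s₁ ∈ Finset.Icc 1 (s-1), w s₁ * (m4 * m4)
          ≤ 8 * C₁^3 * ∑ s₁ ∈ Finset.Icc 1 (s-1), w s₁ * (m4 * m4) := by
            exact mul_le_mul_of_nonneg_right (by nlinarith) hsum0
        _ ≤ 8 * C₁^3 * (C₁ * m4^2) :=
            mul_le_mul_of_nonneg_left hsum_le (by positivity)
        _ = 8 * C₁^4 * m4^2 := by ring
    linarith
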